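/- Let Γ and A be countable groups, let Γ act on A by group automorphisms, let (Φ_j) be a Følner sequence in Γ, and let (F_i) be a Følner sequence in A. Then there exists a subsequence (F_{i(j)}) of (F_i) such that the sets Φ_j·F_{i(j)} := {γ·a : γ ∈ Φ_j, a ∈ F_{i(j)}} (products taken in the semidirect product Γ⋉A, where Γ and A are identified with their canonical images in Γ⋉A) form a Følner sequence in Γ⋉A. -/

import Mathlib

open scoped Pointwise

/-- A Følner sequence. -/
def IsFolnerSeq {Λ : Type*} [Group Λ] (Φ : ℕ → Finset Λ) : Prop :=
  letI := Classical.decEq Λ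
  (∀ i, (Φ i).Nonempty) ∧
    ∀ S : Finset Λ, Filter.Tendsto
      (fun i => ((((S ×ˢ Φ i).image fun p => p.1 * p.2) \ Φ i).card : ℝ) / ((Φ i).card : ℝ))
        Filter.atTop (nhds 0)

variable {k : Type*} [Field k] {Λ : Type*} [Group Λ]

/-- inclusion of k[Φ] into k[Λ] -/
noncomputable def spanIncl (Φ : Finset Λ) : (↥Φ → k) →ₗ[k] MonoidAlgebra k Λ where
  toFun f := ∑ x : Φ, f x • MonoidAlgebra.single (x : Λ) (1 : k)
  map_add' f g := by simp [add_smul, Finset.sum_add_distrib]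
  map_smul' c f := by simp [smul_smul, Finset.smul_sum]

/-- projection of k[Λ] onto k[Φ] -/
noncomputable def spanProj (Φ : Finset Λ) : MonoidAlgebra k Λ →ₗ[k] (↥Φ → k) where
  toFun f x := f.coeff (x : Λ)
  map_add' f g := by ext x; exact Finsupp.add_apply f.coeff g.coeff x
  map_smul' c f := by ext x; exact Finsupp.smul_apply c f.coeff x

/-- compression of a matrix over k[Λ] to a finite subset Φ -/
noncomputable def compress {ι κ : Type*} [Fintype ι] [Fintype κ]
    (T : Matrix ι κ (MonoidAlgebra k Λ)) (Φ : Finset Λ) :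
    (κ → (↥Φ → k)) →ₗ[k] (ι → (↥Φ → k)) :=
  LinearMap.pi fun i => (spanProj Φ).comp <|
    ∑ j : κ, (LinearMap.mulLeft k (T i j)).comp ((spanIncl Φ).comp (LinearMap.proj j))

/-- the kernel gradient of `T` along `Φ` exists and equals `r`. -/
noncomputable def HasKernelGradient {ι κ : Type*} [Fintype ι] [Fintype κ]
    (T : Matrix ι κ (MonoidAlgebra k Λ)) (Φ : ℕ → Finset Λ) (r : ℝ) : Prop :=
  Filter.Tendsto
    (fun i => (Module.finrank k (LinearMap.ker (compress T (Φ i))) : ℝ) / ((Φ i).card : ℝ))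
    Filter.atTop (nhds r)

open Filter SemidirectProduct

section auxlem

lemma singleton_prod_image [DecidableEq Λ] (g : Λ) (s : Finset Λ) :
    (({g} ×ˢ s).image fun p => p.1 * p.2) = s.image (fun x => g * x) := by
  ext x
  simp only [Finset.mem_image, Finset.mem_product, Finset.mem_singleton, Prod.exists]
  constructor
  · rintro ⟨a, b, ⟨rfl, hb⟩, rfl⟩; exact ⟨b, hb, rfl⟩
  · rintro ⟨b, hb, rfl⟩; exact ⟨g, b, ⟨rfl, hb⟩, rfl⟩

lemma singles_of_folner (E : ℕ → Finset Λ) (h : IsFolnerSeq E) (g : Λ) :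
    Filter.Tendsto (fun i =>
      letI := Classical.decEq Λ
      (((E i).image (fun x => g * x) \ E i).card : ℝ) / ((E i).card : ℝ))
      Filter.atTop (nhds 0) := by
  have := h.2 {g}
  simpa only [singleton_prod_image] using this

lemma folner_of_singles (E : ℕ → Finset Λ) (hne : ∀ i, (E i).Nonempty)
    (h : ∀ g : Λ, Filter.Tendsto (fun i =>
      letI := Classical.decEq Λ
      (((E i).image (fun x => g * x) \ E i).card : ℝ) / ((E i).card : ℝ))
      Filter.atTop (nhds 0)) : IsFolnerSeq E := by
  letI := Classical.decEq Λ
  refine ⟨hne, fun S => ?_⟩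
  have hsum : Filter.Tendsto (fun i => ∑ s ∈ S,
      (((E i).image (fun x => s * x) \ E i).card : ℝ) / ((E i).card : ℝ))
      Filter.atTop (nhds 0) := by
    have := tendsto_finset_sum S (fun s _ => h s)
    simpa using this
  apply squeeze_zero (fun i => by positivity) ?_ hsum
  intro i
  have hb : ((((S ×ˢ E i).image fun p => p.1 * p.2) \ E i).card : ℝ)
      ≤ ∑ s ∈ S, (((E i).image (fun x => s * x) \ E i).card : ℝ) := by
    have hss : (((S ×ˢ E i).image fun p => p.1 * p.2) \ E i)
        ⊆ S.biUnion (fun s => (E i).image (fun x => s * x) \ E i) := by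
      intro x hx
      rw [Finset.mem_sdiff] at hx
      obtain ⟨hx1, hx2⟩ := hx
      rw [Finset.mem_image] at hx1
      obtain ⟨p, hp, rfl⟩ := hx1
      rw [Finset.mem_product] at hp
      rw [Finset.mem_biUnion]
      exact ⟨p.1, hp.1, Finset.mem_sdiff.2 ⟨Finset.mem_image_of_mem _ hp.2, hx2⟩⟩
    calc ((((S ×ˢ E i).image fun p => p.1 * p.2) \ E i).card : ℝ)
        ≤ ((S.biUnion (fun s => (E i).image (fun x => s * x) \ E i)).card : ℝ) := by
          exact_mod_cast Finset.card_le_card hss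
      _ ≤ ∑ s ∈ S, (((E i).image (fun x => s * x) \ E i).card : ℝ) := by
          exact_mod_cast Finset.card_biUnion_le
  rw [← Finset.sum_div]
  have hpos : (0:ℝ) < ((E i).card : ℝ) := by
    exact_mod_cast Finset.card_pos.2 (hne i)
  exact div_le_div_of_nonneg_right hb hpos.le

end auxlem

section semidirect
variable {Γ A : Type} [Group Γ] [Group A] {φ : Γ →* MulAut A}

lemma inr_mul_inl_injective : Function.Injective
    (fun p : Γ × A => (inr p.1 * inl p.2 : SemidirectProduct A Γ φ)) := by
  intro p q h
  have hr := congrArg SemidirectProduct.right h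
  have hl := congrArg SemidirectProduct.left h
  simp only [mul_right, right_inr, right_inl, mul_one, mul_left, left_inr, left_inl,
    one_mul] at hr hl
  rw [hr] at hl
  exact Prod.ext hr ((φ q.1).injective hl)

lemma key_mul (g : SemidirectProduct A Γ φ) (γ : Γ) (a : A) :
    g * (inr γ * inl a) = (⟨g.left * φ (g.right * γ) a, g.right * γ⟩ : SemidirectProduct A Γ φ) := by
  ext <;> simp [mul_left, mul_right, map_mul, mul_assoc]

lemma main_bound [DecidableEq Γ] [DecidableEq A] [DecidableEq (SemidirectProduct A Γ φ)]
    (Φ : Finset Γ) (F : Finset A) (g : SemidirectProduct A Γ φ) :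
    ((((Φ ×ˢ F).image fun p => (inr p.1 * inl p.2 : SemidirectProduct A Γ φ)).image
        (fun x => g * x))
      \ ((Φ ×ˢ F).image fun p => (inr p.1 * inl p.2 : SemidirectProduct A Γ φ))).card
    ≤ ((Φ.image (fun γ => g.right * γ)) \ Φ).card * F.card
      + ∑ γ ∈ Φ, ((F.image (fun a => φ γ⁻¹ g.left * a)) \ F).card := by
  classical
  set E : Finset (SemidirectProduct A Γ φ) :=
    (Φ ×ˢ F).image fun p => (inr p.1 * inl p.2 : SemidirectProduct A Γ φ) with hE
  set X : Finset (SemidirectProduct A Γ φ) :=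
    (((Φ.image (fun γ => g.right * γ)) \ Φ) ×ˢ F).image
      (fun p : Γ × A => (⟨g.left * φ p.1 p.2, p.1⟩ : SemidirectProduct A Γ φ)) with hX
  set Y : Finset (SemidirectProduct A Γ φ) :=
    Φ.biUnion (fun γ => ((F.image (fun a => φ γ⁻¹ g.left * a)) \ F).image
      (fun a => (inr γ * inl a : SemidirectProduct A Γ φ))) with hY
  have hsub : (E.image (fun x => g * x)) \ E ⊆ X ∪ Y := by
    intro x hx
    rw [Finset.mem_sdiff] at hx
    obtain ⟨hx1, hx2⟩ := hx
    rw [Finset.mem_image] at hx1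
    obtain ⟨y, hy, rfl⟩ := hx1
    rw [hE, Finset.mem_image] at hy
    obtain ⟨p, hp, rfl⟩ := hy
    rw [Finset.mem_product] at hp
    obtain ⟨hγ, ha⟩ := hp
    by_cases hmem : g.right * p.1 ∈ Φ
    · apply Finset.mem_union_right
      rw [hY, Finset.mem_biUnion]
      refine ⟨g.right * p.1, hmem, ?_⟩
      rw [Finset.mem_image]
      refine ⟨φ (g.right * p.1)⁻¹ g.left * p.2, ?_, ?_⟩
      · rw [Finset.mem_sdiff]
        constructor
        · exact Finset.mem_image_of_mem _ ha
        · intro hcon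
          apply hx2
          rw [hE, Finset.mem_image]
          refine ⟨(g.right * p.1, φ (g.right * p.1)⁻¹ g.left * p.2), ?_, ?_⟩
          · rw [Finset.mem_product]; exact ⟨hmem, hcon⟩
          · rw [key_mul]
            ext <;> simp [mul_left, mul_right, map_mul, map_inv]
      · rw [key_mul]
        ext <;> simp [mul_left, mul_right, map_mul, map_inv]
    · apply Finset.mem_union_left
      rw [hX, Finset.mem_image]
      refine ⟨(g.right * p.1, p.2), ?_, ?_⟩
      · rw [Finset.mem_product, Finset.mem_sdiff]
        exact ⟨⟨Finset.mem_image_of_mem _ hγ, hmem⟩, ha⟩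
      · rw [key_mul]
  calc ((E.image (fun x => g * x)) \ E).card ≤ (X ∪ Y).card := Finset.card_le_card hsub
    _ ≤ X.card + Y.card := Finset.card_union_le _ _
    _ ≤ ((Φ.image (fun γ => g.right * γ)) \ Φ).card * F.card
        + ∑ γ ∈ Φ, ((F.image (fun a => φ γ⁻¹ g.left * a)) \ F).card := by
        gcongr
        · calc X.card ≤ (((Φ.image (fun γ => g.right * γ)) \ Φ) ×ˢ F).card :=
                Finset.card_image_le
            _ = _ := Finset.card_product _ _
        · calc Y.card ≤ ∑ γ ∈ Φ, (((F.image (fun a => φ γ⁻¹ g.left * a)) \ F).image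
                (fun a => (inr γ * inl a : SemidirectProduct A Γ φ))).card :=
                Finset.card_biUnion_le
            _ ≤ _ := Finset.sum_le_sum fun γ _ => Finset.card_image_le

end semidirect

/-- STATEMENT 12: if `(Φ_j)` is a Følner sequence in `Γ`, `(F_i)` one in `A`, and `Γ` acts
on `A` by automorphisms, then for a suitable subsequence `(F_{i(j)})` the sets
`Φ_j · F_{i(j)}` form a Følner sequence in the semidirect product `Γ⋉A = A ⋊[φ] Γ`. -/
theorem statement12 (Γ A : Type) [Group Γ] [Group A] [Countable Γ] [Countable A]
    (φ : Γ →* MulAut A) (Φ : ℕ → Finset Γ) (F : ℕ → Finset A)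
    (hΦ : IsFolnerSeq Φ) (hF : IsFolnerSeq F) :
    ∃ i : ℕ → ℕ, StrictMono i ∧
      IsFolnerSeq (fun j =>
        letI := Classical.decEq (SemidirectProduct A Γ φ)
        (Φ j ×ˢ F (i j)).image fun p =>
          (SemidirectProduct.inr p.1 * SemidirectProduct.inl p.2 :
            SemidirectProduct A Γ φ)) := by
  obtain ⟨e, he⟩ := exists_surjective_nat A
  letI : DecidableEq Γ := Classical.decEq Γ
  letI : DecidableEq A := Classical.decEq A
  letI : DecidableEq (SemidirectProduct A Γ φ) := Classical.decEq _
  set D : ℕ → Finset A := fun j =>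
    ((Φ j) ×ˢ Finset.range (j+1)).image (fun p => φ p.1⁻¹ (e p.2)) with hD
  have hexist : ∀ j : ℕ, ∃ N : ℕ, ∀ n ≥ N, ∀ c ∈ D j,
      (((F n).image (fun a => c * a) \ F n).card : ℝ) ≤ ((F n).card : ℝ) / ((j:ℝ)+1) := by
    intro j
    rw [← Filter.eventually_atTop]
    rw [Filter.eventually_all_finset]
    intro c _
    have h1 := singles_of_folner F hF c
    have h2 : ∀ᶠ n in Filter.atTop,
        (((F n).image (fun a => c * a) \ F n).card : ℝ) / ((F n).card : ℝ)
          < 1/((j:ℝ)+1) := by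
      apply h1.eventually_lt_const
      positivity
    filter_upwards [h2] with n hn
    have hpos : (0:ℝ) < ((F n).card : ℝ) := by
      exact_mod_cast Finset.card_pos.2 (hF.1 n)
    rw [le_div_iff₀ (by positivity : (0:ℝ) < (j:ℝ)+1)]
    have := (div_le_div_iff₀ hpos (by positivity : (0:ℝ) < (j:ℝ)+1)).mp hn.le
    linarith
  choose N hN using hexist
  set idx : ℕ → ℕ := fun j => Nat.rec (N 0) (fun k ih => max (N (k+1)) (ih+1)) j with hidxdef
  have hmono : StrictMono idx :=
    strictMono_nat_of_lt_succ fun n =>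
      lt_of_lt_of_le (Nat.lt_succ_self _) (le_max_right _ _)
  have hidx : ∀ j, N j ≤ idx j := by
    intro j
    cases j with
    | zero => exact le_refl _
    | succ k => exact le_max_left _ _
  refine ⟨idx, hmono, ?_⟩
  set E : ℕ → Finset (SemidirectProduct A Γ φ) := fun j =>
    (Φ j ×ˢ F (idx j)).image (fun p => inr p.1 * inl p.2) with hEdef
  apply folner_of_singles E
  · intro j
    exact Finset.Nonempty.image ((hΦ.1 j).product (hF.1 (idx j))) _
  · intro g
    obtain ⟨m, hm⟩ := he g.left
    have htend : Filter.Tendsto (fun j =>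
        (((Φ j).image (fun x => g.right * x) \ Φ j).card : ℝ) / ((Φ j).card : ℝ)
          + 1/((j:ℝ)+1)) Filter.atTop (nhds 0) := by
      have := (singles_of_folner Φ hΦ g.right).add tendsto_one_div_add_atTop_nhds_zero_nat
      simpa using this
    apply squeeze_zero' (Filter.Eventually.of_forall fun j => by positivity) ?_ htend
    filter_upwards [Filter.eventually_ge_atTop m] with j hj
    have hQpos : (0:ℝ) < ((F (idx j)).card : ℝ) := by
      exact_mod_cast Finset.card_pos.2 (hF.1 (idx j))
    have hPpos : (0:ℝ) < ((Φ j).card : ℝ) := by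
      exact_mod_cast Finset.card_pos.2 (hΦ.1 j)
    have hcardE : ((E j).card : ℝ) = ((Φ j).card : ℝ) * ((F (idx j)).card : ℝ) := by
      rw [hEdef]
      rw [Finset.card_image_of_injective _ inr_mul_inl_injective, Finset.card_product]
      push_cast
      ring
    have hmb := main_bound (φ := φ) (Φ j) (F (idx j)) g
    have hmbR : (((E j).image (fun x => g * x) \ E j).card : ℝ)
        ≤ (((Φ j).image (fun x => g.right * x) \ Φ j).card : ℝ) * ((F (idx j)).card : ℝ)
          + ∑ γ ∈ Φ j, (((F (idx j)).image (fun a => φ γ⁻¹ g.left * a) \ F (idx j)).card : ℝ) := by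
      rw [hEdef]
      exact_mod_cast hmb
    have hsummand : ∀ γ ∈ Φ j,
        (((F (idx j)).image (fun a => φ γ⁻¹ g.left * a) \ F (idx j)).card : ℝ)
          ≤ ((F (idx j)).card : ℝ) / ((j:ℝ)+1) := by
      intro γ hγ
      apply hN j (idx j) (hidx j)
      rw [hD]
      refine Finset.mem_image.2 ⟨(γ, m), Finset.mem_product.2
        ⟨hγ, Finset.mem_range.2 (Nat.lt_succ_of_le hj)⟩, by rw [hm]⟩
    have hsum2 : (∑ γ ∈ Φ j, (((F (idx j)).image
          (fun a => φ γ⁻¹ g.left * a) \ F (idx j)).card : ℝ))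
        ≤ ((Φ j).card : ℝ) * (((F (idx j)).card : ℝ) / ((j:ℝ)+1)) := by
      calc _ ≤ ∑ _γ ∈ Φ j, ((F (idx j)).card : ℝ) / ((j:ℝ)+1) :=
            Finset.sum_le_sum hsummand
        _ = _ := by rw [Finset.sum_const, nsmul_eq_mul]
    calc (((E j).image (fun x => g * x) \ E j).card : ℝ) / ((E j).card : ℝ)
        ≤ ((((Φ j).image (fun x => g.right * x) \ Φ j).card : ℝ) * ((F (idx j)).card : ℝ)
          + ((Φ j).card : ℝ) * (((F (idx j)).card : ℝ) / ((j:ℝ)+1))) / ((E j).card : ℝ) := by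
          apply div_le_div_of_nonneg_right _ (by rw [hcardE]; positivity)
          exact hmbR.trans (by linarith)
      _ = (((Φ j).image (fun x => g.right * x) \ Φ j).card : ℝ) / ((Φ j).card : ℝ)
          + 1/((j:ℝ)+1) := by
          rw [hcardE]
          field_simp
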